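/- The map p ↦ h(p)/(p²(1-p)) is strictly decreasing on (0, π₀], where h(p) = ρ_L(1-p) - ρ_H p; equivalently, its derivative (-2p²(ρ_H+ρ_L) + p(ρ_H+4ρ_L) - 2ρ_L)/((1-p)²p³) is negative on (0,π₀], because the numerator, as a function of p, attains its maximum on [0,π₀] at p = π₀ with maximal value -ρ_L ρ_H/(ρ_H+ρ_L) < 0. -/

import Mathlib

open Set

/-- The map `p ↦ h(p)/(p²(1-p))` is strictly decreasing on `(0, π₀]`, where
`h(p) = ρ_L(1-p) - ρ_H p`; equivalently, its derivative
`(-2p²(ρ_H+ρ_L) + p(ρ_H+4ρ_L) - 2ρ_L)/((1-p)²p³)` is negative on `(0,π₀]`,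
because the numerator attains its maximum on `[0,π₀]` at `p = π₀`, with maximal
value `-ρ_L ρ_H/(ρ_H+ρ_L) < 0`. -/
theorem stmt_4 (ρL ρH : ℝ) (hρL : 0 < ρL) (hρH : 0 < ρH) :
    StrictAntiOn
      (fun p : ℝ => (ρL * (1 - p) - ρH * p) / (p ^ 2 * (1 - p)))
      (Ioc 0 (ρL / (ρL + ρH))) ∧
    (∀ p ∈ Ioc (0:ℝ) (ρL / (ρL + ρH)),
      HasDerivAt (fun q : ℝ => (ρL * (1 - q) - ρH * q) / (q ^ 2 * (1 - q)))
        ((-2 * p ^ 2 * (ρH + ρL) + p * (ρH + 4 * ρL) - 2 * ρL) / ((1 - p) ^ 2 * p ^ 3)) p ∧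
      (-2 * p ^ 2 * (ρH + ρL) + p * (ρH + 4 * ρL) - 2 * ρL) / ((1 - p) ^ 2 * p ^ 3) < 0) ∧
    (∀ p ∈ Icc (0:ℝ) (ρL / (ρL + ρH)),
      -2 * p ^ 2 * (ρH + ρL) + p * (ρH + 4 * ρL) - 2 * ρL ≤
        -ρL * ρH / (ρH + ρL)) ∧
    (-2 * (ρL / (ρL + ρH)) ^ 2 * (ρH + ρL) + (ρL / (ρL + ρH)) * (ρH + 4 * ρL) - 2 * ρL
        = -ρL * ρH / (ρH + ρL)) ∧
    -ρL * ρH / (ρH + ρL) < 0 := by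
  have hS : 0 < ρL + ρH := by linarith
  have hπ1 : ρL / (ρL + ρH) < 1 := by
    rw [div_lt_one hS]; linarith
  have hmax : ∀ p ∈ Icc (0:ℝ) (ρL / (ρL + ρH)),
      -2 * p ^ 2 * (ρH + ρL) + p * (ρH + 4 * ρL) - 2 * ρL ≤ -ρL * ρH / (ρH + ρL) := by
    intro p hp
    obtain ⟨hp0, hp1⟩ := hp
    have hpS : p * (ρL + ρH) ≤ ρL := by
      rwa [le_div_iff₀ hS] at hp1
    rw [le_div_iff₀ (by linarith : (0:ℝ) < ρH + ρL)]
    nlinarith [mul_nonneg hp0 (sub_nonneg.2 hpS), sq_nonneg p,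
      mul_nonneg (mul_nonneg hp0 hp0) (sub_nonneg.2 hpS)]
  have hd : ∀ p ∈ Ioc (0:ℝ) (ρL / (ρL + ρH)),
      HasDerivAt (fun q : ℝ => (ρL * (1 - q) - ρH * q) / (q ^ 2 * (1 - q)))
        ((-2 * p ^ 2 * (ρH + ρL) + p * (ρH + 4 * ρL) - 2 * ρL) / ((1 - p) ^ 2 * p ^ 3)) p ∧
      (-2 * p ^ 2 * (ρH + ρL) + p * (ρH + 4 * ρL) - 2 * ρL) / ((1 - p) ^ 2 * p ^ 3) < 0 := by
    intro p hp
    obtain ⟨hp0, hp1⟩ := hp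
    have hp1' : p < 1 := lt_of_le_of_lt hp1 hπ1
    have h1p : 0 < 1 - p := by linarith
    have hden : p ^ 2 * (1 - p) ≠ 0 := by
      exact mul_ne_zero (pow_ne_zero _ (ne_of_gt hp0)) (ne_of_gt h1p)
    have hnum : HasDerivAt (fun q : ℝ => ρL * (1 - q) - ρH * q) (-(ρL + ρH)) p := by
      have : HasDerivAt (fun q : ℝ => ρL * (1 - q) - ρH * q) (ρL * (0 - 1) - ρH * 1) p := by
        exact (((hasDerivAt_const p (1:ℝ)).sub (hasDerivAt_id p)).const_mul ρL).sub
          ((hasDerivAt_id p).const_mul ρH)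
      convert this using 1; ring
    have hdenD : HasDerivAt (fun q : ℝ => q ^ 2 * (1 - q)) (2 * p * (1 - p) + p ^ 2 * (-1)) p := by
      have h1 : HasDerivAt (fun q : ℝ => q ^ 2) (2 * p) p := by
        simpa using (hasDerivAt_pow 2 p)
      have h2 : HasDerivAt (fun q : ℝ => 1 - q) (0 - 1) p :=
        (hasDerivAt_const p (1:ℝ)).sub (hasDerivAt_id p)
      exact (h1.mul h2).congr_deriv (by ring)
    have hder := hnum.div hdenD hden
    have heq : (-(ρL + ρH) * (p ^ 2 * (1 - p)) -
        (ρL * (1 - p) - ρH * p) * (2 * p * (1 - p) + p ^ 2 * (-1))) / (p ^ 2 * (1 - p)) ^ 2 =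
        (-2 * p ^ 2 * (ρH + ρL) + p * (ρH + 4 * ρL) - 2 * ρL) / ((1 - p) ^ 2 * p ^ 3) := by
      rw [div_eq_div_iff (ne_of_gt (pow_pos (mul_pos (pow_pos hp0 2) h1p) 2)) (ne_of_gt (mul_pos (pow_pos h1p 2) (pow_pos hp0 3)))]; ring
    constructor
    · exact heq ▸ hder
    · apply div_neg_of_neg_of_pos _ (mul_pos (pow_pos h1p 2) (pow_pos hp0 3))
      have := hmax p ⟨le_of_lt hp0, hp1⟩
      have hneg : -ρL * ρH / (ρH + ρL) < 0 := by
        apply div_neg_of_neg_of_pos (by nlinarith) (by linarith)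
      linarith
  refine ⟨?_, hd, hmax, by field_simp; ring, ?_⟩
  · apply strictAntiOn_of_deriv_neg (convex_Ioc _ _)
    · apply ContinuousOn.div
      · fun_prop
      · fun_prop
      · intro p hp
        obtain ⟨hp0, hp1⟩ := hp
        have h1 : p < 1 := lt_of_le_of_lt hp1 hπ1
        exact mul_ne_zero (pow_ne_zero _ (ne_of_gt hp0)) (by linarith)
    · intro p hp
      rw [interior_Ioc] at hp
      obtain ⟨h1, h2⟩ := hd p ⟨hp.1, le_of_lt hp.2⟩
      rw [h1.deriv]; exact h2
  · exact div_neg_of_neg_of_pos (by nlinarith) (by linarith)
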